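/- arXiv:2510.23332 — 4 statements merged into one kernel-verified Lean document; each statement's English description precedes it below -/
import Mathlib

section
/- Let P, Q_K be symmetric positive definite n×n matrices, A_K an n×n matrix, γ ∈ (0,1), with P = Q_K + γ A_K^T P A_K, and let Â_K = P^{1/2} A_K P^{-1/2}. Then the spectral norm of Â_K equals sqrt( (1/γ)(1 - λ_min(P^{-1/2} Q_K P^{-1/2})) ), where λ_min denotes the smallest eigenvalue. -/
open Matrix
open scoped Matrix.Norms.L2Operator

noncomputable def specNorm {n : ℕ} (M : Matrix (Fin n) (Fin n) ℝ) : ℝ :=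
  ‖Matrix.toEuclideanCLM (𝕜 := ℝ) (n := Fin n) M‖

lemma toEuclideanCLM_apply_coord {n : ℕ} (A : Matrix (Fin n) (Fin n) ℝ)
    (x : EuclideanSpace ℝ (Fin n)) (i : Fin n) :
    (Matrix.toEuclideanCLM (𝕜 := ℝ) (n := Fin n) A x) i = (A *ᵥ (fun j => x j)) i := by
  have h := congrFun (ofLp_toEuclideanCLM (𝕜 := ℝ) A x) i
  simpa [Matrix.toLin'_apply] using h

lemma l2_norm_diagonal {n : ℕ} (hne : (Finset.univ : Finset (Fin n)).Nonempty)
    (d : Fin n → ℝ) :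
    ‖Matrix.toEuclideanCLM (𝕜 := ℝ) (n := Fin n) (diagonal d)‖ =
      Finset.univ.sup' hne (fun i => |d i|) := by
  set c := Finset.univ.sup' hne (fun i => |d i|) with hc
  obtain ⟨i0, _, hi0⟩ := Finset.exists_mem_eq_sup' hne (fun i => |d i|)
  have hc0 : 0 ≤ c := by rw [hc, hi0]; exact abs_nonneg _
  apply le_antisymm
  · apply ContinuousLinearMap.opNorm_le_bound _ hc0
    intro x
    rw [EuclideanSpace.norm_eq, EuclideanSpace.norm_eq]
    rw [show c * Real.sqrt (∑ i, ‖x i‖ ^ 2) = Real.sqrt (c^2 * ∑ i, ‖x i‖ ^ 2) by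
      rw [Real.sqrt_mul (by positivity), Real.sqrt_sq hc0]]
    apply Real.sqrt_le_sqrt
    rw [Finset.mul_sum]
    apply Finset.sum_le_sum
    intro i _
    rw [toEuclideanCLM_apply_coord, mulVec_diagonal]
    have hdi : |d i| ≤ c := Finset.le_sup' (fun i => |d i|) (Finset.mem_univ i)
    have h1 : ‖d i * x i‖ = |d i| * ‖x i‖ := by
      simp [Real.norm_eq_abs, abs_mul]
    rw [h1, mul_pow]
    have : |d i|^2 ≤ c^2 := by nlinarith [abs_nonneg (d i)]
    nlinarith [sq_nonneg ‖x i‖, norm_nonneg (x i)]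
  · rw [hc, hi0]
    have happ : Matrix.toEuclideanCLM (𝕜 := ℝ) (n := Fin n) (diagonal d)
        (EuclideanSpace.single i0 1) = EuclideanSpace.single i0 (d i0) := by
      ext i
      rw [toEuclideanCLM_apply_coord, mulVec_diagonal]
      by_cases h : i = i0 <;> simp [EuclideanSpace.single_apply, h]
    have hop := (Matrix.toEuclideanCLM (𝕜 := ℝ) (n := Fin n) (diagonal d)).le_opNorm
      (EuclideanSpace.single i0 1)
    rw [happ, EuclideanSpace.norm_single, EuclideanSpace.norm_single, norm_one, mul_one,
      Real.norm_eq_abs] at hop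
    exact hop

theorem stmt2 {n : ℕ} (hn : 0 < n) (P QK AK Psqrt : Matrix (Fin n) (Fin n) ℝ)
    (hP : P.PosDef) (hQK : QK.PosDef) (γ : ℝ) (hγ : γ ∈ Set.Ioo (0 : ℝ) 1)
    (hLyap : P = QK + γ • (AKᵀ * P * AK))
    (hPsqrtPD : Psqrt.PosDef) (hPsqrtSym : Psqrtᵀ = Psqrt) (hPsqrtSq : Psqrt * Psqrt = P)
    (hM : (Psqrt⁻¹ * QK * Psqrt⁻¹).IsHermitian) :
    specNorm (Psqrt * AK * Psqrt⁻¹) =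
      Real.sqrt ((1 / γ) *
        (1 - Finset.univ.inf' (Finset.univ_nonempty_iff.mpr (Fin.pos_iff_nonempty.mp hn))
          (fun i => hM.eigenvalues i))) := by
  obtain ⟨hγ0, hγ1⟩ := hγ
  have hne : (Finset.univ : Finset (Fin n)).Nonempty :=
    Finset.univ_nonempty_iff.mpr (Fin.pos_iff_nonempty.mp hn)
  have hγ' : γ ≠ 0 := ne_of_gt hγ0
  set Mm := Psqrt⁻¹ * QK * Psqrt⁻¹ with hMdef
  set B := Psqrt * AK * Psqrt⁻¹ with hBdef
  set lam : Fin n → ℝ := fun i => hM.eigenvalues i with hlam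
  set μ := Finset.univ.inf' hne lam with hμ
  have hdet : IsUnit Psqrt.det := hPsqrtPD.det_pos.ne'.isUnit
  have h1 : Psqrt * Psqrt⁻¹ = 1 := mul_nonsing_inv _ hdet
  have h2 : Psqrt⁻¹ * Psqrt = 1 := nonsing_inv_mul _ hdet
  have hTinv : Psqrt⁻¹ᵀ = Psqrt⁻¹ := by rw [transpose_nonsing_inv, hPsqrtSym]
  have hAKPAK : AKᵀ * P * AK = γ⁻¹ • (P - QK) := by
    have h : γ • (AKᵀ * P * AK) = P - QK := eq_sub_of_add_eq' hLyap.symm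
    rw [← h, smul_smul, inv_mul_cancel₀ hγ', one_smul]
  have hBH : Bᴴ = Psqrt⁻¹ * AKᵀ * Psqrt := by
    rw [conjTranspose_eq_transpose_of_trivial, hBdef, transpose_mul, transpose_mul,
      hTinv, hPsqrtSym, Matrix.mul_assoc]
  have hmid : Psqrt⁻¹ * P * Psqrt⁻¹ = 1 := by
    rw [← hPsqrtSq, ← Matrix.mul_assoc, Matrix.mul_assoc _ _ Psqrt⁻¹, h1, Matrix.mul_one, h2]
  have hkey : Bᴴ * B = γ⁻¹ • (1 - Mm) := by
    rw [hBH, hBdef]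
    have e1 : Psqrt⁻¹ * AKᵀ * Psqrt * (Psqrt * AK * Psqrt⁻¹)
        = Psqrt⁻¹ * (AKᵀ * P * AK) * Psqrt⁻¹ := by
      rw [← hPsqrtSq]
      simp only [Matrix.mul_assoc]
    rw [e1, hAKPAK, Matrix.mul_smul, Matrix.smul_mul]
    congr 1
    rw [Matrix.mul_sub, Matrix.sub_mul, hmid, hMdef]
  -- eigenvalue bounds: lam i ≤ 1
  have hPSD : (Bᴴ * B).PosSemidef := posSemidef_conjTranspose_mul_self B
  have hle1 : ∀ i, lam i ≤ 1 := by
    intro i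
    have hv := hM.mulVec_eigenvectorBasis i
    set v : Fin n → ℝ := (WithLp.equiv 2 _) (hM.eigenvectorBasis i) with hvdef
    have hvne : v ≠ 0 := by
      intro h
      apply hM.eigenvectorBasis.orthonormal.ne_zero i
      have := congrArg (WithLp.equiv 2 ((i : Fin n) → ℝ)).symm h
      rw [hvdef] at this
      simpa using this
    have hpos : 0 < star v ⬝ᵥ v := dotProduct_star_self_pos_iff.mpr hvne
    have h0 := hPSD.dotProduct_mulVec_nonneg v
    rw [hkey] at h0
    have hexp : (γ⁻¹ • ((1 : Matrix (Fin n) (Fin n) ℝ) - Mm)) *ᵥ v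
        = γ⁻¹ • (v - lam i • v) := by
      have hv' : Mm *ᵥ v = lam i • v := hv
      rw [smul_mulVec, sub_mulVec, one_mulVec, hv']
    rw [hexp] at h0
    have h0' : 0 ≤ γ⁻¹ * ((1 - lam i) * (star v ⬝ᵥ v)) := by
      have : star v ⬝ᵥ (γ⁻¹ • (v - lam i • v))
          = γ⁻¹ * ((1 - lam i) * (star v ⬝ᵥ v)) := by
        rw [dotProduct_smul, dotProduct_sub, dotProduct_smul]
        ring_nf
      rw [this] at h0
      exact h0
    have hγinv : 0 < γ⁻¹ := inv_pos.mpr hγ0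
    by_contra hgt
    push_neg at hgt
    have hneg : (1 - lam i) * (star v ⬝ᵥ v) < 0 := mul_neg_of_neg_of_pos (by linarith) hpos
    have := mul_neg_of_pos_of_neg hγinv hneg
    linarith
  -- the norm computation
  set d : Fin n → ℝ := fun i => γ⁻¹ * (1 - lam i) with hd
  have hd0 : ∀ i, 0 ≤ d i := by
    intro i
    have := hle1 i
    have hγinv : 0 < γ⁻¹ := inv_pos.mpr hγ0
    have : 0 ≤ 1 - lam i := by linarith
    positivity
  let U := hM.eigenvectorUnitary
  have hUmem : (U : Matrix (Fin n) (Fin n) ℝ) ∈ unitary (Matrix (Fin n) (Fin n) ℝ) := U.2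
  have hSd : γ⁻¹ • ((1 : Matrix (Fin n) (Fin n) ℝ) - Mm)
      = (U : Matrix (Fin n) (Fin n) ℝ) * diagonal d * star (U : Matrix (Fin n) (Fin n) ℝ) := by
    have hspec : Mm = (U : Matrix (Fin n) (Fin n) ℝ) * diagonal lam
        * star (U : Matrix (Fin n) (Fin n) ℝ) := by
      have := hM.spectral_theorem
      simpa [RCLike.ofReal_real_eq_id] using this
    have hUU : (U : Matrix (Fin n) (Fin n) ℝ) * star (U : Matrix (Fin n) (Fin n) ℝ) = 1 :=
      Unitary.coe_mul_star_self (⟨(U : Matrix (Fin n) (Fin n) ℝ), hUmem⟩ : unitary _)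
    have hdiag : diagonal d = γ⁻¹ • ((1 : Matrix (Fin n) (Fin n) ℝ) - diagonal lam) := by
      ext i j
      rcases eq_or_ne i j with rfl | h
      · simp [Matrix.smul_apply, Matrix.sub_apply, Matrix.one_apply_eq, d]
      · simp [diagonal_apply_ne _ h, Matrix.smul_apply, Matrix.sub_apply, Matrix.one_apply_ne h]
    rw [hdiag, Matrix.mul_smul, Matrix.smul_mul]
    congr 1
    rw [hspec, Matrix.mul_sub, Matrix.mul_one, Matrix.sub_mul, hUU]
  have hnormBB : ‖Bᴴ * B‖ = Finset.univ.sup' hne (fun i => |d i|) := by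
    rw [hkey, hSd]
    have e1 : ‖(U : Matrix (Fin n) (Fin n) ℝ) * diagonal d * star (U : Matrix (Fin n) (Fin n) ℝ)‖
        = ‖diagonal d‖ := by
      rw [Matrix.mul_assoc]
      rw [CStarRing.norm_coe_unitary_mul (⟨(U : Matrix (Fin n) (Fin n) ℝ), hUmem⟩ : unitary _)]
      have : star ((U : Matrix (Fin n) (Fin n) ℝ))
          = ((star (⟨(U : Matrix (Fin n) (Fin n) ℝ), hUmem⟩ : unitary _) : unitary _) :
              Matrix (Fin n) (Fin n) ℝ) := rfl
      rw [this, CStarRing.norm_mul_coe_unitary]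
    rw [e1]
    exact l2_norm_diagonal hne d
  have hsup : Finset.univ.sup' hne (fun i => |d i|) = γ⁻¹ * (1 - μ) := by
    apply le_antisymm
    · apply Finset.sup'_le
      intro i _
      rw [abs_of_nonneg (hd0 i)]
      have hμle : μ ≤ lam i := Finset.inf'_le lam (Finset.mem_univ i)
      have hγinv : 0 < γ⁻¹ := inv_pos.mpr hγ0
      have : 1 - lam i ≤ 1 - μ := by linarith
      exact mul_le_mul_of_nonneg_left this (le_of_lt hγinv)
    · obtain ⟨i, _, hi⟩ := Finset.exists_mem_eq_inf' hne lam
      rw [hμ, hi]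
      calc γ⁻¹ * (1 - lam i) = |d i| := (abs_of_nonneg (hd0 i)).symm
        _ ≤ _ := Finset.le_sup' (fun i => |d i|) (Finset.mem_univ i)
  have hnormsq : specNorm B ^ 2 = γ⁻¹ * (1 - μ) := by
    have hcs : ‖Bᴴ * B‖ = ‖B‖ * ‖B‖ := Matrix.l2_opNorm_conjTranspose_mul_self B
    have hBnorm : specNorm B = ‖B‖ := rfl
    rw [hBnorm, sq, ← hcs, hnormBB, hsup]
  have hfin : specNorm B = Real.sqrt (γ⁻¹ * (1 - μ)) := by
    rw [← hnormsq, Real.sqrt_sq]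
    exact norm_nonneg _
  rw [one_div]
  exact hfin
end

section
/- Let H = [H_{ij}] be an Nn×Nn real block matrix with n×n blocks. For each eigenvalue λ of H, there exists at least one index i ∈ {1,…,N} such that either H_{ii} - λI is singular, or (‖(H_{ii} - λI)^{-1}‖)^{-1} ≤ Σ_{j≠i} ‖H_{ij}‖, where ‖·‖ denotes the spectral norm. -/
open Matrix

noncomputable def specNormC {n : ℕ} (M : Matrix (Fin n) (Fin n) ℂ) : ℝ :=
  ‖Matrix.toEuclideanCLM (𝕜 := ℂ) (n := Fin n) M‖

theorem stmt4 {n N : ℕ} (Hblk : Fin N → Fin N → Matrix (Fin n) (Fin n) ℝ)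
    (lam : ℂ) (v : Fin N × Fin n → ℂ) (hv : v ≠ 0)
    (heig : (Matrix.of fun (p q : Fin N × Fin n) =>
        ((Hblk p.1 q.1).map (Complex.ofReal) : Matrix (Fin n) (Fin n) ℂ) p.2 q.2).mulVec v
      = lam • v) :
    ∃ i : Fin N,
      ¬ IsUnit ((Hblk i i).map Complex.ofReal - lam • (1 : Matrix (Fin n) (Fin n) ℂ)) ∨
      (specNormC (((Hblk i i).map Complex.ofReal - lam • 1)⁻¹))⁻¹ ≤
        ∑ j ∈ Finset.univ.erase i, specNormC ((Hblk i j).map Complex.ofReal) := by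
  classical
  -- block components as Euclidean vectors
  set V : Fin N → EuclideanSpace ℂ (Fin n) :=
    fun i => (WithLp.equiv 2 (Fin n → ℂ)).symm (fun k => v (i, k)) with hV
  -- some component is nonzero
  obtain ⟨p, hp⟩ : ∃ p, v p ≠ 0 := by
    by_contra h
    push_neg at h
    exact hv (funext fun p => h p)
  have hN : (Finset.univ : Finset (Fin N)).Nonempty := ⟨p.1, Finset.mem_univ _⟩
  obtain ⟨i, -, hi⟩ := Finset.exists_max_image Finset.univ (fun i => ‖V i‖) hN
  have hVp : V p.1 ≠ 0 := by
    intro h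
    apply hp
    have := congrFun (congrArg (WithLp.equiv 2 (Fin n → ℂ)) h) p.2
    simpa [hV] using this
  have hVi : 0 < ‖V i‖ :=
    lt_of_lt_of_le (norm_pos_iff.mpr hVp) (hi p.1 (Finset.mem_univ _))
  set B : Matrix (Fin n) (Fin n) ℂ :=
    (Hblk i i).map Complex.ofReal - lam • (1 : Matrix (Fin n) (Fin n) ℂ) with hB
  refine ⟨i, ?_⟩
  by_cases hU : IsUnit B
  · right
    -- block eigen equation
    have hrow : ∀ k : Fin n,
        ∑ j : Fin N, (((Hblk i j).map Complex.ofReal).mulVec (fun l => v (j, l))) k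
          = lam * v (i, k) := by
      intro k
      have := congrFun heig (i, k)
      simp only [Matrix.mulVec, dotProduct, Matrix.of_apply, Pi.smul_apply,
        smul_eq_mul] at this
      rw [← this, Fintype.sum_prod_type]
      rfl
    have hkey : B.mulVec (fun l => v (i, l))
        = - ∑ j ∈ Finset.univ.erase i,
            ((Hblk i j).map Complex.ofReal).mulVec (fun l => v (j, l)) := by
      funext k
      have h1 := hrow k
      rw [← Finset.add_sum_erase _ _ (Finset.mem_univ i)] at h1
      have : B.mulVec (fun l => v (i, l)) k
          = (((Hblk i i).map Complex.ofReal).mulVec (fun l => v (i, l))) k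
            - lam * v (i, k) := by
        simp [hB, Matrix.sub_mulVec, Matrix.smul_mulVec, Matrix.one_mulVec]
      rw [this]
      have h2 : (((Hblk i i).map Complex.ofReal).mulVec (fun l => v (i, l))) k
          = lam * v (i, k) - ∑ j ∈ Finset.univ.erase i,
              (((Hblk i j).map Complex.ofReal).mulVec (fun l => v (j, l))) k := by
        linear_combination h1
      rw [h2]
      simp
    -- pass to Euclidean space
    have hE : (Matrix.toEuclideanCLM (𝕜 := ℂ) B) (V i)
        = - ∑ j ∈ Finset.univ.erase i,
            (Matrix.toEuclideanCLM (𝕜 := ℂ) ((Hblk i j).map Complex.ofReal)) (V j) := by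
      apply (WithLp.equiv 2 (Fin n → ℂ)).injective
      simp only [hV, WithLp.equiv_symm_apply, Matrix.toEuclideanCLM_toLp, WithLp.equiv_apply, WithLp.ofLp_toLp,
        Matrix.toLin'_apply]
      rw [hkey]
      ext k
      simp [Matrix.toLin'_apply, Finset.sum_apply]
    have hdet : IsUnit B.det := (Matrix.isUnit_iff_isUnit_det B).mp hU
    have hinv : B⁻¹ * B = 1 := Matrix.nonsing_inv_mul B hdet
    have hVi_eq : V i = (Matrix.toEuclideanCLM (𝕜 := ℂ) B⁻¹)
        ((Matrix.toEuclideanCLM (𝕜 := ℂ) B) (V i)) := by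
      have : (Matrix.toEuclideanCLM (𝕜 := ℂ) B⁻¹).comp
          (Matrix.toEuclideanCLM (𝕜 := ℂ) B) = Matrix.toEuclideanCLM (𝕜 := ℂ) (B⁻¹ * B) := by
        rw [_root_.map_mul]; rfl
      have := congrArg (fun f => f (V i)) this
      simp only [ContinuousLinearMap.comp_apply] at this
      rw [this, hinv, _root_.map_one]
      rfl
    -- norm estimates
    set a : ℝ := specNormC B⁻¹ with ha
    set S : ℝ := ∑ j ∈ Finset.univ.erase i, specNormC ((Hblk i j).map Complex.ofReal) with hS
    have hns : ∀ j, 0 ≤ specNormC ((Hblk i j).map Complex.ofReal) := fun j => norm_nonneg _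
    have hbound : ‖V i‖ ≤ a * (S * ‖V i‖) := by
      calc ‖V i‖ = ‖(Matrix.toEuclideanCLM (𝕜 := ℂ) B⁻¹)
            ((Matrix.toEuclideanCLM (𝕜 := ℂ) B) (V i))‖ := by rw [← hVi_eq]
        _ ≤ a * ‖(Matrix.toEuclideanCLM (𝕜 := ℂ) B) (V i)‖ :=
            (Matrix.toEuclideanCLM (𝕜 := ℂ) B⁻¹).le_opNorm _
        _ ≤ a * (S * ‖V i‖) := by
            apply mul_le_mul_of_nonneg_left _ (norm_nonneg _)
            rw [hE, norm_neg]
            calc ‖∑ j ∈ Finset.univ.erase i,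
                  (Matrix.toEuclideanCLM (𝕜 := ℂ) ((Hblk i j).map Complex.ofReal)) (V j)‖
                ≤ ∑ j ∈ Finset.univ.erase i,
                  ‖(Matrix.toEuclideanCLM (𝕜 := ℂ) ((Hblk i j).map Complex.ofReal)) (V j)‖ :=
                  norm_sum_le _ _
              _ ≤ ∑ j ∈ Finset.univ.erase i,
                  specNormC ((Hblk i j).map Complex.ofReal) * ‖V i‖ := by
                  apply Finset.sum_le_sum
                  intro j _
                  calc ‖(Matrix.toEuclideanCLM (𝕜 := ℂ) ((Hblk i j).map Complex.ofReal)) (V j)‖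
                      ≤ specNormC ((Hblk i j).map Complex.ofReal) * ‖V j‖ :=
                        ContinuousLinearMap.le_opNorm _ _
                    _ ≤ specNormC ((Hblk i j).map Complex.ofReal) * ‖V i‖ :=
                        mul_le_mul_of_nonneg_left (hi j (Finset.mem_univ _)) (hns j)
              _ = S * ‖V i‖ := by rw [hS, Finset.sum_mul]
    have h1aS : 1 ≤ a * S := by
      have := hbound
      rw [← mul_assoc] at this
      nlinarith
    have hapos : 0 < a := by
      rcases lt_or_eq_of_le (norm_nonneg (Matrix.toEuclideanCLM (𝕜 := ℂ) B⁻¹)) with h | h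
      · exact h
      · exfalso; rw [ha, specNormC, ← h] at h1aS; linarith
    rw [show (specNormC B⁻¹)⁻¹ = a⁻¹ from rfl, inv_eq_one_div, div_le_iff₀ hapos]
    nlinarith
  · exact Or.inl hU
end

section
/- Let a ∈ ℝ with |a| < 1, p > 0, γ ∈ (0,1), and N ∈ ℕ with N ≥ 1. Define the N×N symmetric matrix H with entries H_{ij} = γ^i p if i = j, γ^j p a^{j-i} if i < j, and γ^i p a^{i-j} if i > j. Then the leading principal minor of H of order i equals p^i γ^{i(i+1)/2} (1 - γ a^2)^{i-1} for each i = 1,…,N, and consequently H is positive definite. -/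
open Matrix Finset

namespace Stmt8Aux

/-- diagonal entries of the LDLᵀ factorization -/
def dfun (p γ a : ℝ) (k : ℕ) : ℝ :=
  if k = 0 then γ * p else γ ^ (k + 1) * p * (1 - γ * a ^ 2)

/-- the unitriangular factor -/
def Lm (γ a : ℝ) (n : ℕ) : Matrix (Fin n) (Fin n) ℝ :=
  fun i j => if j ≤ i then (γ * a) ^ (i.val - j.val) else 0

lemma sum_d (p γ a : ℝ) (m : ℕ) :
    ∑ k ∈ range (m + 1), (γ * a) ^ (2 * (m - k)) * dfun p γ a k = γ ^ (m + 1) * p := by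
  induction m with
  | zero => simp [dfun]
  | succ m ih =>
    rw [sum_range_succ]
    have h1 : ∑ k ∈ range (m + 1), (γ * a) ^ (2 * (m + 1 - k)) * dfun p γ a k
        = (γ * a) ^ 2 * ∑ k ∈ range (m + 1), (γ * a) ^ (2 * (m - k)) * dfun p γ a k := by
      rw [mul_sum]
      refine sum_congr rfl fun k hk => ?_
      have hk' : k ≤ m := by simpa using Nat.lt_succ_iff.mp (mem_range.mp hk)
      have : 2 * (m + 1 - k) = 2 + 2 * (m - k) := by omega
      rw [this, pow_add]; ring
    rw [h1, ih, Nat.sub_self, mul_zero, pow_zero, one_mul, dfun]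
    simp only [Nat.succ_ne_zero, if_false]
    ring

lemma sum_entry (p γ a : ℝ) (n : ℕ) (i j : Fin n) (hij : i.val ≤ j.val) :
    ∑ k : Fin n, Lm γ a n i k * dfun p γ a k.val * Lm γ a n j k
      = γ ^ (j.val + 1) * p * a ^ (j.val - i.val) := by
  set g : ℕ → ℝ := fun k =>
    (if k ≤ i.val then (γ * a) ^ (i.val - k) else 0) * dfun p γ a k *
      (if k ≤ j.val then (γ * a) ^ (j.val - k) else 0) with hg
  have h0 : ∑ k : Fin n, Lm γ a n i k * dfun p γ a k.val * Lm γ a n j k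
      = ∑ k ∈ range n, g k := by
    rw [← Fin.sum_univ_eq_sum_range]
    refine Finset.sum_congr rfl fun k _ => ?_
    simp only [Lm, hg, Fin.le_def]
  have h1 : ∑ k ∈ range n, g k = ∑ k ∈ range (i.val + 1), g k := by
    refine (Finset.sum_subset (Finset.range_subset_range.mpr i.isLt) fun k _ hk => ?_).symm
    have : ¬ k ≤ i.val := by simpa using hk
    simp [hg, this]
  have h2 : ∑ k ∈ range (i.val + 1), g k
      = (γ * a) ^ (j.val - i.val) *
        ∑ k ∈ range (i.val + 1), (γ * a) ^ (2 * (i.val - k)) * dfun p γ a k := by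
    rw [mul_sum]
    refine sum_congr rfl fun k hk => ?_
    have hk' : k ≤ i.val := Nat.lt_succ_iff.mp (mem_range.mp hk)
    have hkj : k ≤ j.val := le_trans hk' hij
    simp only [hg, if_pos hk', if_pos hkj]
    have e1 : j.val - k = (j.val - i.val) + (i.val - k) := by omega
    have e2 : 2 * (i.val - k) = (i.val - k) + (i.val - k) := by omega
    rw [e1, e2, pow_add, pow_add]; ring
  rw [h0, h1, h2, sum_d]
  rw [mul_pow, show j.val + 1 = (j.val - i.val) + (i.val + 1) by omega, pow_add]
  ring

lemma factor (p γ a : ℝ) (n : ℕ) (M : Matrix (Fin n) (Fin n) ℝ)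
    (hM : ∀ i j : Fin n, M i j =
      if i = j then γ ^ (i.val + 1) * p
      else if i < j then γ ^ (j.val + 1) * p * a ^ (j.val - i.val)
      else γ ^ (i.val + 1) * p * a ^ (i.val - j.val)) :
    M = Lm γ a n * Matrix.diagonal (fun k : Fin n => dfun p γ a k.val) * (Lm γ a n)ᵀ := by
  ext i j
  rw [hM]
  have hrhs : (Lm γ a n * Matrix.diagonal (fun k : Fin n => dfun p γ a k.val) * (Lm γ a n)ᵀ) i j
      = ∑ k : Fin n, Lm γ a n i k * dfun p γ a k.val * Lm γ a n j k := by
    rw [Matrix.mul_apply]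
    refine Finset.sum_congr rfl fun k _ => ?_
    rw [Matrix.mul_diagonal, Matrix.transpose_apply]
  rw [hrhs]
  rcases lt_trichotomy i j with h | h | h
  · have hij : i.val ≤ j.val := le_of_lt h
    rw [sum_entry p γ a n i j hij]
    rw [if_neg (ne_of_lt h), if_pos h]
  · subst h
    have := sum_entry p γ a n i i le_rfl
    rw [this]
    simp
  · have hij : j.val ≤ i.val := le_of_lt h
    have hsym : ∑ k : Fin n, Lm γ a n i k * dfun p γ a k.val * Lm γ a n j k
        = ∑ k : Fin n, Lm γ a n j k * dfun p γ a k.val * Lm γ a n i k := by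
      refine Finset.sum_congr rfl fun k _ => by ring
    rw [hsym, sum_entry p γ a n j i hij]
    rw [if_neg (ne_of_gt h), if_neg (not_lt.mpr (le_of_lt h))]

lemma det_Lm (γ a : ℝ) (n : ℕ) : (Lm γ a n).det = 1 := by
  rw [Matrix.det_of_lowerTriangular (Lm γ a n)
    (by intro i j hij
        exact if_neg (not_le.mpr (by exact_mod_cast hij)))]
  simp [Lm]

lemma prod_d (p γ a : ℝ) (n : ℕ) (hn : 1 ≤ n) :
    ∏ k ∈ range n, dfun p γ a k
      = p ^ n * γ ^ (n * (n + 1) / 2) * (1 - γ * a ^ 2) ^ (n - 1) := by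
  induction n, hn using Nat.le_induction with
  | base => simp [dfun]; ring
  | succ n hn ih =>
    rw [prod_range_succ, ih, dfun, if_neg (by omega)]
    have hexp : (n + 1) * (n + 1 + 1) / 2 = n * (n + 1) / 2 + (n + 1) := by
      obtain ⟨t, ht⟩ := Nat.even_mul_succ_self n
      have h2 : (n + 1) * (n + 1 + 1) = n * (n + 1) + 2 * (n + 1) := by ring
      omega
    rw [hexp, pow_add, pow_succ, show n + 1 - 1 = (n - 1) + 1 by omega, pow_succ]
    ring

lemma det_M (p γ a : ℝ) (n : ℕ) (hn : 1 ≤ n) (M : Matrix (Fin n) (Fin n) ℝ)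
    (hM : ∀ i j : Fin n, M i j =
      if i = j then γ ^ (i.val + 1) * p
      else if i < j then γ ^ (j.val + 1) * p * a ^ (j.val - i.val)
      else γ ^ (i.val + 1) * p * a ^ (i.val - j.val)) :
    M.det = p ^ n * γ ^ (n * (n + 1) / 2) * (1 - γ * a ^ 2) ^ (n - 1) := by
  rw [factor p γ a n M hM, Matrix.det_mul, Matrix.det_mul, Matrix.det_transpose,
    det_Lm, Matrix.det_diagonal, one_mul, mul_one]
  rw [Fin.prod_univ_eq_prod_range (fun k => dfun p γ a k) n]
  exact prod_d p γ a n hn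

lemma posdef_M (p γ a : ℝ) (ha : |a| < 1) (hp : 0 < p) (hγ0 : 0 < γ) (hγ1 : γ < 1)
    (n : ℕ) (M : Matrix (Fin n) (Fin n) ℝ)
    (hM : ∀ i j : Fin n, M i j =
      if i = j then γ ^ (i.val + 1) * p
      else if i < j then γ ^ (j.val + 1) * p * a ^ (j.val - i.val)
      else γ ^ (i.val + 1) * p * a ^ (i.val - j.val)) :
    M.PosDef := by
  have hfac := factor p γ a n M hM
  have hc : 0 < 1 - γ * a ^ 2 := by
    have ha2 : a ^ 2 < 1 := by
      have := abs_nonneg a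
      nlinarith [sq_abs a]
    nlinarith
  have hd : ∀ k : Fin n, 0 < dfun p γ a k.val := by
    intro k
    unfold dfun
    split
    · positivity
    · positivity
  have hD : (Matrix.diagonal fun k : Fin n => dfun p γ a k.val).PosDef :=
    Matrix.PosDef.diagonal hd
  have hLdet : (Lm γ a n)ᵀ.det ≠ 0 := by
    rw [Matrix.det_transpose, det_Lm]; norm_num
  have hinj : Function.Injective ((Lm γ a n)ᵀ).mulVec :=
    Matrix.mulVec_injective_iff_isUnit.mpr (Matrix.isUnit_iff_isUnit_det _ |>.mpr
      (isUnit_iff_ne_zero.mpr hLdet))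
  rw [Matrix.posDef_iff_dotProduct_mulVec]
  constructor
  · rw [hfac, Matrix.IsHermitian, Matrix.conjTranspose_eq_transpose_of_trivial,
      Matrix.transpose_mul, Matrix.transpose_mul, Matrix.transpose_transpose,
      Matrix.diagonal_transpose, Matrix.mul_assoc]
  · intro x hx
    have hy : (Lm γ a n)ᵀ *ᵥ x ≠ 0 := by
      intro h
      exact hx (hinj (by simpa using h))
    have hM2 : M = ((Lm γ a n)ᵀ)ᴴ * (Matrix.diagonal fun k : Fin n => dfun p γ a k.val) *
        (Lm γ a n)ᵀ := by
      rw [hfac, Matrix.conjTranspose_eq_transpose_of_trivial, Matrix.transpose_transpose]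
    rw [hM2]
    simpa only [star_mulVec, dotProduct_mulVec, vecMul_vecMul] using hD.dotProduct_mulVec_pos hy

end Stmt8Aux

theorem stmt8 {N : ℕ} (hN : 1 ≤ N) (a p γ : ℝ) (ha : |a| < 1) (hp : 0 < p)
    (hγ : γ ∈ Set.Ioo (0 : ℝ) 1)
    (H : Matrix (Fin N) (Fin N) ℝ)
    (hH : ∀ i j : Fin N, H i j =
      if i = j then γ ^ (i.val + 1) * p
      else if i < j then γ ^ (j.val + 1) * p * a ^ (j.val - i.val)
      else γ ^ (i.val + 1) * p * a ^ (i.val - j.val)) :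
    (∀ k : Fin N,
      (H.submatrix (Fin.castLE k.isLt : Fin (k.val + 1) → Fin N)
          (Fin.castLE k.isLt : Fin (k.val + 1) → Fin N)).det =
        p ^ (k.val + 1) * γ ^ (((k.val + 1) * (k.val + 2)) / 2) *
          (1 - γ * a ^ 2) ^ k.val) ∧
    H.PosDef := by
  constructor
  · intro k
    have hsub : ∀ i j : Fin (k.val + 1),
        (H.submatrix (Fin.castLE k.isLt) (Fin.castLE k.isLt)) i j =
        if i = j then γ ^ (i.val + 1) * p
        else if i < j then γ ^ (j.val + 1) * p * a ^ (j.val - i.val)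
        else γ ^ (i.val + 1) * p * a ^ (i.val - j.val) := by
      intro i j
      rw [Matrix.submatrix_apply, hH]
      have hval_i : ((Fin.castLE k.isLt : Fin (k.val+1) → Fin N) i).val = i.val := rfl
      have hval_j : ((Fin.castLE k.isLt : Fin (k.val+1) → Fin N) j).val = j.val := rfl
      have heq : (Fin.castLE k.isLt i = Fin.castLE k.isLt j) ↔ (i = j) := by
        constructor
        · intro h; exact Fin.ext (by rw [← hval_i, ← hval_j, h])
        · intro h; rw [h]
      have hlt : (Fin.castLE k.isLt i < Fin.castLE k.isLt j) ↔ (i < j) := Iff.rfl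
      by_cases h1 : i = j
      · rw [if_pos h1, if_pos (heq.mpr h1)]; rfl
      · rw [if_neg h1, if_neg (fun h => h1 (heq.mp h))]
        by_cases h2 : i < j
        · rw [if_pos h2, if_pos (hlt.mpr h2)]; rfl
        · rw [if_neg h2, if_neg (fun h => h2 (hlt.mp h))]; rfl
    have := Stmt8Aux.det_M p γ a (k.val + 1) (Nat.le_add_left 1 k.val) _ hsub
    rw [this]
    norm_num
  · exact Stmt8Aux.posdef_M p γ a ha hp hγ.1 hγ.2 N H hH
end

section
/- Let S : ℝ^m → ℝ be a convex function, and let Z be an ℝ^m-valued random variable with log-concave probability density f_Z. Then the cumulative distribution function F(g) = P[S(Z) ≤ g] = ∫_{{z : S(z) ≤ g}} f_Z(z) dz is a log-concave function of g ∈ ℝ. -/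
open MeasureTheory Set Filter ENNReal NNReal Topology Pointwise

namespace PLAux

variable {θ : ℝ}

/-- Two-point AM-GM inequality in `ℝ≥0∞`. -/
lemma amgm (hθ0 : 0 < θ) (hθ1 : θ < 1) (a b : ℝ≥0∞) :
    a ^ (1 - θ) * b ^ θ ≤ ENNReal.ofReal (1 - θ) * a + ENNReal.ofReal θ * b := by
  have h1θ : (0:ℝ) < 1 - θ := by linarith
  rcases eq_or_ne a ⊤ with rfl | ha
  · rcases eq_or_ne b 0 with rfl | hb
    · rw [ENNReal.zero_rpow_of_pos hθ0, mul_zero]; exact zero_le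
    · have h : ENNReal.ofReal (1 - θ) * (⊤:ℝ≥0∞) + ENNReal.ofReal θ * b = ⊤ := by
        rw [ENNReal.mul_top (by simp [ENNReal.ofReal_eq_zero]; linarith), top_add]
      rw [h]; exact le_top
  rcases eq_or_ne b ⊤ with rfl | hb
  · have h : ENNReal.ofReal (1 - θ) * a + ENNReal.ofReal θ * (⊤:ℝ≥0∞) = ⊤ := by
      rw [ENNReal.mul_top (by simp [ENNReal.ofReal_eq_zero]; linarith), add_top]
    rw [h]; exact le_top
  lift a to ℝ≥0 using ha
  lift b to ℝ≥0 using hb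
  have hw : Real.toNNReal (1 - θ) + Real.toNNReal θ = 1 := by
    rw [← Real.toNNReal_add h1θ.le hθ0.le]; norm_num
  have key := NNReal.geom_mean_le_arith_mean2_weighted
    (Real.toNNReal (1 - θ)) (Real.toNNReal θ) a b hw
  have hc1 : ((Real.toNNReal (1 - θ) : ℝ≥0) : ℝ) = 1 - θ := Real.coe_toNNReal _ h1θ.le
  have hc2 : ((Real.toNNReal θ : ℝ≥0) : ℝ) = θ := Real.coe_toNNReal _ hθ0.le
  rw [hc1, hc2] at key
  have e1 : ENNReal.ofReal (1 - θ) = ((Real.toNNReal (1 - θ) : ℝ≥0) : ℝ≥0∞) := rfl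
  have e2 : ENNReal.ofReal θ = ((Real.toNNReal θ : ℝ≥0) : ℝ≥0∞) := rfl
  rw [e1, e2, ← ENNReal.coe_rpow_of_nonneg a h1θ.le, ← ENNReal.coe_rpow_of_nonneg b hθ0.le,
    ← ENNReal.coe_mul, ← ENNReal.coe_mul, ← ENNReal.coe_mul, ← ENNReal.coe_add,
    ENNReal.coe_le_coe]
  exact key

/-- Superadditivity of Lebesgue measure on sums of nonempty compact subsets of `ℝ`. -/
lemma vol_compact_add {K L : Set ℝ} (hK : IsCompact K) (hL : IsCompact L)
    (hKn : K.Nonempty) (hLn : L.Nonempty) : volume K + volume L ≤ volume (K + L) := by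
  obtain ⟨k, hkK, hk⟩ := hK.exists_isGreatest hKn
  obtain ⟨l, hlL, hl⟩ := hL.exists_isLeast hLn
  have hXc : IsCompact (k +ᵥ L) := by
    rw [← Set.image_vadd]; exact hL.image (continuous_const.add continuous_id)
  have hYc : IsCompact (l +ᵥ K) := by
    rw [← Set.image_vadd]; exact hK.image (continuous_const.add continuous_id)
  have hXsub : k +ᵥ L ⊆ K + L := by
    rintro x ⟨y, hy, rfl⟩
    exact Set.add_mem_add hkK hy
  have hYsub : l +ᵥ K ⊆ K + L := by
    rintro x ⟨y, hy, rfl⟩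
    have : y + l ∈ K + L := Set.add_mem_add hy hlL
    show l + y ∈ K + L
    rwa [add_comm l y]
  have hinter : (l +ᵥ K) ∩ (k +ᵥ L) ⊆ {k + l} := by
    rintro x ⟨hx1, hx2⟩
    rw [Set.mem_vadd_set] at hx1 hx2
    obtain ⟨y, hy, hyx⟩ := hx1
    obtain ⟨z, hz, hzx⟩ := hx2
    rw [vadd_eq_add] at hyx hzx
    have h1 : y ≤ k := hk hy
    have h2 : l ≤ z := hl hz
    have hx : x = k + l := le_antisymm (by linarith) (by linarith)
    simp [hx]
  calc volume K + volume L = volume (l +ᵥ K) + volume (k +ᵥ L) := by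
        rw [measure_vadd, measure_vadd]
    _ = volume ((l +ᵥ K) ∪ (k +ᵥ L)) + volume ((l +ᵥ K) ∩ (k +ᵥ L)) :=
        (measure_union_add_inter _ hXc.measurableSet).symm
    _ = volume ((l +ᵥ K) ∪ (k +ᵥ L)) := by
        have : volume ((l +ᵥ K) ∩ (k +ᵥ L)) = 0 :=
          le_antisymm ((measure_mono hinter).trans (by simp)) (zero_le)
        rw [this, add_zero]
    _ ≤ volume (K + L) := measure_mono (Set.union_subset hYsub hXsub)

/-- Key one-dimensional sub-level-set inequality. -/
lemma level_step (hθ0 : 0 < θ) (hθ1 : θ < 1) {A B C : Set ℝ}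
    (hA : MeasurableSet A) (hB : MeasurableSet B) (hAn : A.Nonempty) (hBn : B.Nonempty)
    (hsub : ∀ x ∈ A, ∀ y ∈ B, (1 - θ) * x + θ * y ∈ C) :
    ENNReal.ofReal (1 - θ) * volume A + ENNReal.ofReal θ * volume B ≤ volume C := by
  have h1θ : (0:ℝ) < 1 - θ := by linarith
  obtain ⟨a, haA⟩ := hAn
  obtain ⟨b, hbB⟩ := hBn
  -- the basic inequality for compact subsets
  have key : ∀ K ⊆ A, IsCompact K → ∀ L ⊆ B, IsCompact L →
      ENNReal.ofReal (1 - θ) * volume K + ENNReal.ofReal θ * volume L ≤ volume C := by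
    intro K hKA hK L hLB hL
    set K' : Set ℝ := insert a K with hK'def
    set L' : Set ℝ := insert b L with hL'def
    have hK' : IsCompact K' := hK.insert a
    have hL' : IsCompact L' := hL.insert b
    have hK'A : K' ⊆ A := Set.insert_subset haA hKA
    have hL'B : L' ⊆ B := Set.insert_subset hbB hLB
    have hsc : IsCompact ((1 - θ) • K') := hK'.smul _
    have hsl : IsCompact (θ • L') := hL'.smul _
    have hsum : (1 - θ) • K' + θ • L' ⊆ C := by
      rintro x ⟨x1, hx1, x2, hx2, rfl⟩
      obtain ⟨u, hu, rfl⟩ := hx1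
      obtain ⟨v, hv, rfl⟩ := hx2
      simpa [smul_eq_mul] using hsub u (hK'A hu) v (hL'B hv)
    have hMK : volume ((1 - θ) • K') = ENNReal.ofReal (1 - θ) * volume K' := by
      rw [Measure.addHaar_smul_of_nonneg volume h1θ.le K']; simp
    have hML : volume (θ • L') = ENNReal.ofReal θ * volume L' := by
      rw [Measure.addHaar_smul_of_nonneg volume hθ0.le L']; simp
    calc ENNReal.ofReal (1 - θ) * volume K + ENNReal.ofReal θ * volume L
        ≤ ENNReal.ofReal (1 - θ) * volume K' + ENNReal.ofReal θ * volume L' :=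
          add_le_add (mul_le_mul_right (measure_mono (Set.subset_insert _ _)) _)
            (mul_le_mul_right (measure_mono (Set.subset_insert _ _)) _)
      _ = volume ((1 - θ) • K') + volume (θ • L') := by rw [hMK, hML]
      _ ≤ volume ((1 - θ) • K' + θ • L') :=
          vol_compact_add hsc hsl (Set.Nonempty.smul_set ⟨a, Set.mem_insert _ _⟩)
            (Set.Nonempty.smul_set ⟨b, Set.mem_insert _ _⟩)
      _ ≤ volume C := measure_mono hsum
  have hc1ne : ENNReal.ofReal (1 - θ) ≠ 0 := by simp [ENNReal.ofReal_eq_zero]; linarith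
  have hc2ne : ENNReal.ofReal θ ≠ 0 := by simp [ENNReal.ofReal_eq_zero]; linarith
  -- infinite cases
  rcases eq_or_ne (volume A) ⊤ with hAtop | hAfin
  · -- volume C = ∞
    have hCtop : volume C = ⊤ := by
      by_contra hC
      have hbig : ∀ r : ℝ≥0∞, r ≠ ⊤ → ∃ K ⊆ A, IsCompact K ∧ r < volume K := by
        intro r hr
        have := hA.measure_eq_iSup_isCompact (volume : Measure ℝ)
        rw [hAtop] at this
        have hlt : r < ⨆ (K : Set ℝ) (_ : K ⊆ A) (_ : IsCompact K), volume K := by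
          rw [← this]; exact lt_top_iff_ne_top.mpr hr
        obtain ⟨K, hKc, hKA, hKr⟩ := by simpa [lt_iSup_iff] using hlt
        exact ⟨K, hKA, hKc, hKr⟩
      obtain ⟨K, hKA, hKc, hKr⟩ := hbig ((ENNReal.ofReal (1 - θ))⁻¹ * volume C)
        (by simp [ENNReal.mul_eq_top, hC, ENNReal.inv_ne_top.mpr hc1ne])
      have h1 := key K hKA hKc {b} (by simpa using hbB) isCompact_singleton
      have h2 : ENNReal.ofReal (1 - θ) * volume K ≤ volume C :=
        le_trans (self_le_add_right _ _) h1
      have h3 : volume K ≤ (ENNReal.ofReal (1 - θ))⁻¹ * volume C := by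
        rw [← ENNReal.div_eq_inv_mul]
        exact ENNReal.le_div_iff_mul_le (Or.inl hc1ne) (Or.inl ENNReal.ofReal_ne_top) |>.mpr
          (by rwa [mul_comm])
      exact absurd (lt_of_lt_of_le hKr h3) (lt_irrefl _)
    rw [hCtop]; exact le_top
  rcases eq_or_ne (volume B) ⊤ with hBtop | hBfin
  · have hCtop : volume C = ⊤ := by
      by_contra hC
      have hbig : ∀ r : ℝ≥0∞, r ≠ ⊤ → ∃ L ⊆ B, IsCompact L ∧ r < volume L := by
        intro r hr
        have := hB.measure_eq_iSup_isCompact (volume : Measure ℝ)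
        rw [hBtop] at this
        have hlt : r < ⨆ (L : Set ℝ) (_ : L ⊆ B) (_ : IsCompact L), volume L := by
          rw [← this]; exact lt_top_iff_ne_top.mpr hr
        obtain ⟨L, hLc, hLB, hLr⟩ := by simpa [lt_iSup_iff] using hlt
        exact ⟨L, hLB, hLc, hLr⟩
      obtain ⟨L, hLB, hLc, hLr⟩ := hbig ((ENNReal.ofReal θ)⁻¹ * volume C)
        (by simp [ENNReal.mul_eq_top, hC, ENNReal.inv_ne_top.mpr hc2ne])
      have h1 := key {a} (by simpa using haA) isCompact_singleton L hLB hLc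
      have h2 : ENNReal.ofReal θ * volume L ≤ volume C :=
        le_trans (self_le_add_left _ _) h1
      have h3 : volume L ≤ (ENNReal.ofReal θ)⁻¹ * volume C := by
        rw [← ENNReal.div_eq_inv_mul]
        exact ENNReal.le_div_iff_mul_le (Or.inl hc2ne) (Or.inl ENNReal.ofReal_ne_top) |>.mpr
          (by rwa [mul_comm])
      exact absurd (lt_of_lt_of_le hLr h3) (lt_irrefl _)
    rw [hCtop]; exact le_top
  -- finite case: ε-approximation by compacts
  refine ENNReal.le_of_forall_pos_le_add fun ε hε hCfin => ?_
  obtain ⟨K, hKA, hKc, hKε⟩ := hA.exists_isCompact_lt_add hAfin (ε := (ε:ℝ≥0∞))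
    (by exact_mod_cast hε.ne')
  obtain ⟨L, hLB, hLc, hLε⟩ := hB.exists_isCompact_lt_add hBfin (ε := (ε:ℝ≥0∞))
    (by exact_mod_cast hε.ne')
  have hsum1 : ENNReal.ofReal (1 - θ) + ENNReal.ofReal θ = 1 := by
    rw [← ENNReal.ofReal_add h1θ.le hθ0.le]; norm_num
  calc ENNReal.ofReal (1 - θ) * volume A + ENNReal.ofReal θ * volume B
      ≤ ENNReal.ofReal (1 - θ) * (volume K + ε) + ENNReal.ofReal θ * (volume L + ε) :=
        add_le_add (mul_le_mul_right hKε.le _) (mul_le_mul_right hLε.le _)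
    _ = (ENNReal.ofReal (1 - θ) * volume K + ENNReal.ofReal θ * volume L)
          + (ENNReal.ofReal (1 - θ) + ENNReal.ofReal θ) * ε := by ring
    _ ≤ volume C + 1 * ε :=
        add_le_add (key K hKA hKc L hLB hLc) (mul_le_mul_left hsum1.le ε)
    _ = volume C + ε := by rw [one_mul]

lemma rpow_ne_zero' {x : ℝ≥0∞} (hx : x ≠ 0) {y : ℝ} (hy : 0 ≤ y) : x ^ y ≠ 0 := by
  intro h
  rcases ENNReal.rpow_eq_zero_iff.mp h with ⟨h1, _⟩ | ⟨_, h2⟩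
  · exact hx h1
  · cases (lt_irrefl (0:ℝ)) (lt_of_le_of_lt hy h2)

lemma div_mul_div' {a b c d : ℝ≥0∞} (hb0 : b ≠ 0) (hd0 : d ≠ 0) :
    (a / b) * (c / d) = (a * c) / (b * d) := by
  rw [div_eq_mul_inv, div_eq_mul_inv, div_eq_mul_inv, ENNReal.mul_inv (Or.inl hb0) (Or.inr hd0)]
  ring

lemma lint_Ioi_of_vanish (F : ℝ → ℝ≥0∞) (hF0 : ∀ t, 1 ≤ t → F t = 0) :
    ∫⁻ t in Ioi (0:ℝ), F t = ∫⁻ t in Ioo (0:ℝ) 1, F t := by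
  have hsplit : Ioi (0:ℝ) = Ioo 0 1 ∪ Ici 1 := by
    ext x
    simp only [mem_Ioi, mem_union, mem_Ioo, mem_Ici]
    constructor
    · intro hx
      by_cases hx1 : x < 1
      · exact Or.inl ⟨hx, hx1⟩
      · exact Or.inr (le_of_not_gt hx1)
    · rintro (⟨h1, _⟩ | h1) <;> linarith
  have hdisj : Disjoint (Ioo (0:ℝ) 1) (Ici 1) := by
    refine Set.disjoint_left.mpr ?_
    rintro x ⟨_, h1⟩ h2
    rw [mem_Ici] at h2
    linarith
  rw [hsplit, lintegral_union measurableSet_Ici hdisj,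
    setLIntegral_congr_fun measurableSet_Ici (fun t ht => hF0 t ht), lintegral_zero,
    add_zero]

/-- Normalized one-dimensional Prékopa–Leindler. -/
lemma PL1_norm (hθ0 : 0 < θ) (hθ1 : θ < 1) (f g h : ℝ → ℝ≥0∞)
    (hf : Measurable f) (hg : Measurable g) (hh : Measurable h)
    (hf1 : ∀ x, f x ≤ 1) (hg1 : ∀ x, g x ≤ 1)
    (hfs : ∀ t : ℝ, 0 < t → t < 1 → ∃ x, ENNReal.ofReal t < f x)
    (hgs : ∀ t : ℝ, 0 < t → t < 1 → ∃ x, ENNReal.ofReal t < g x)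
    (hyp : ∀ x y, f x ^ (1 - θ) * g y ^ θ ≤ h ((1 - θ) * x + θ * y)) :
    ENNReal.ofReal (1 - θ) * (∫⁻ x, f x) + ENNReal.ofReal θ * (∫⁻ x, g x) ≤ ∫⁻ x, h x := by
  have h1θ : (0:ℝ) < 1 - θ := by linarith
  have hfne : ∀ x, f x ≠ ⊤ := fun x => ne_top_of_le_ne_top one_ne_top (hf1 x)
  have hgne : ∀ x, g x ≠ ⊤ := fun x => ne_top_of_le_ne_top one_ne_top (hg1 x)
  -- layer-cake representations
  have rep : ∀ k : ℝ → ℝ≥0∞, Measurable k → (∀ x, k x ≤ 1) →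
      ∫⁻ x, k x = ∫⁻ t in Ioo (0:ℝ) 1, volume {x | ENNReal.ofReal t < k x} := by
    intro k hk hk1
    have hkne : ∀ x, k x ≠ ⊤ := fun x => ne_top_of_le_ne_top one_ne_top (hk1 x)
    calc ∫⁻ x, k x = ∫⁻ x, ENNReal.ofReal ((k x).toReal) :=
          lintegral_congr fun x => (ENNReal.ofReal_toReal (hkne x)).symm
      _ = ∫⁻ t in Ioi (0:ℝ), volume {x | t < (k x).toReal} :=
          lintegral_eq_lintegral_meas_lt volume (ae_of_all _ fun x => ENNReal.toReal_nonneg)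
            hk.ennreal_toReal.aemeasurable
      _ = ∫⁻ t in Ioo (0:ℝ) 1, volume {x | t < (k x).toReal} := by
          refine lint_Ioi_of_vanish _ fun t ht => ?_
          have hempty : {x : ℝ | t < (k x).toReal} = ∅ := by
            ext x
            simp only [mem_setOf_eq, mem_empty_iff_false, iff_false, not_lt]
            calc (k x).toReal ≤ (1:ℝ≥0∞).toReal := ENNReal.toReal_mono one_ne_top (hk1 x)
              _ = 1 := by simp
              _ ≤ t := ht
          rw [hempty]
          simp
      _ = ∫⁻ t in Ioo (0:ℝ) 1, volume {x | ENNReal.ofReal t < k x} := by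
          refine setLIntegral_congr_fun measurableSet_Ioo (fun t ht => ?_)
          congr 1
          ext x
          simp only [mem_setOf_eq]
          exact (ENNReal.ofReal_lt_iff_lt_toReal ht.1.le (hkne x)).symm
  -- bound for h from below
  have reph : ∫⁻ t in Ioo (0:ℝ) 1, volume {x | ENNReal.ofReal t ≤ h x} ≤ ∫⁻ x, h x := by
    have hmins : ∀ x, min (h x) 1 ≠ ⊤ := fun x => ne_top_of_le_ne_top one_ne_top (min_le_right _ _)
    calc ∫⁻ t in Ioo (0:ℝ) 1, volume {x | ENNReal.ofReal t ≤ h x}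
        = ∫⁻ t in Ioo (0:ℝ) 1, volume {x | t ≤ (min (h x) 1).toReal} := by
          refine setLIntegral_congr_fun measurableSet_Ioo (fun t ht => ?_)
          congr 1
          ext x
          simp only [mem_setOf_eq]
          rw [← ENNReal.ofReal_le_iff_le_toReal (hmins x), le_min_iff]
          constructor
          · intro hx
            exact ⟨hx, ENNReal.ofReal_le_one.mpr ht.2.le⟩
          · intro hx
            exact hx.1
      _ ≤ ∫⁻ t in Ioi (0:ℝ), volume {x | t ≤ (min (h x) 1).toReal} :=
          lintegral_mono_set Ioo_subset_Ioi_self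
      _ = ∫⁻ x, ENNReal.ofReal ((min (h x) 1).toReal) :=
          (lintegral_eq_lintegral_meas_le volume (ae_of_all _ fun x => ENNReal.toReal_nonneg)
            (hh.min measurable_const).ennreal_toReal.aemeasurable).symm
      _ = ∫⁻ x, min (h x) 1 := lintegral_congr fun x => ENNReal.ofReal_toReal (hmins x)
      _ ≤ ∫⁻ x, h x := lintegral_mono fun x => min_le_left _ _
  -- key level-set inequality
  have key : ∀ t ∈ Ioo (0:ℝ) 1,
      ENNReal.ofReal (1 - θ) * volume {x | ENNReal.ofReal t < f x} +
        ENNReal.ofReal θ * volume {x | ENNReal.ofReal t < g x} ≤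
      volume {x | ENNReal.ofReal t ≤ h x} := by
    intro t ht
    have htne : ENNReal.ofReal t ≠ 0 := by
      simp only [ne_eq, ENNReal.ofReal_eq_zero, not_le]
      exact ht.1
    refine level_step hθ0 hθ1 (hf measurableSet_Ioi) (hg measurableSet_Ioi)
      (hfs t ht.1 ht.2) (hgs t ht.1 ht.2) ?_
    intro x hx y hy
    simp only [mem_setOf_eq] at hx hy ⊢
    calc ENNReal.ofReal t = ENNReal.ofReal t ^ ((1-θ) + θ) := by norm_num
      _ = ENNReal.ofReal t ^ (1-θ) * ENNReal.ofReal t ^ θ :=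
          ENNReal.rpow_add _ _ htne ENNReal.ofReal_ne_top
      _ ≤ f x ^ (1-θ) * g y ^ θ :=
          mul_le_mul' (ENNReal.rpow_le_rpow hx.le h1θ.le) (ENNReal.rpow_le_rpow hy.le hθ0.le)
      _ ≤ h ((1-θ) * x + θ * y) := hyp x y
  -- measurability in t
  have hmonof : Antitone fun t : ℝ => volume {x | ENNReal.ofReal t < f x} := by
    intro t₁ t₂ h12
    exact measure_mono fun x hx => lt_of_le_of_lt (ENNReal.ofReal_le_ofReal h12) hx
  have hmonog : Antitone fun t : ℝ => volume {x | ENNReal.ofReal t < g x} := by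
    intro t₁ t₂ h12
    exact measure_mono fun x hx => lt_of_le_of_lt (ENNReal.ofReal_le_ofReal h12) hx
  have hmonoh : Antitone fun t : ℝ => volume {x | ENNReal.ofReal t ≤ h x} := by
    intro t₁ t₂ h12
    exact measure_mono fun x hx => le_trans (ENNReal.ofReal_le_ofReal h12) hx
  have c1 : ENNReal.ofReal (1-θ) * (∫⁻ t in Ioo (0:ℝ) 1, volume {x | ENNReal.ofReal t < f x})
      = ∫⁻ t in Ioo (0:ℝ) 1, ENNReal.ofReal (1-θ) * volume {x | ENNReal.ofReal t < f x} :=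
    (lintegral_const_mul' _ _ ENNReal.ofReal_ne_top).symm
  have c2 : ENNReal.ofReal θ * (∫⁻ t in Ioo (0:ℝ) 1, volume {x | ENNReal.ofReal t < g x})
      = ∫⁻ t in Ioo (0:ℝ) 1, ENNReal.ofReal θ * volume {x | ENNReal.ofReal t < g x} :=
    (lintegral_const_mul' _ _ ENNReal.ofReal_ne_top).symm
  have e1 : ENNReal.ofReal (1-θ) * (∫⁻ x, f x)
      = ∫⁻ t in Ioo (0:ℝ) 1, ENNReal.ofReal (1-θ) * volume {x | ENNReal.ofReal t < f x} :=
    (congrArg (fun z => ENNReal.ofReal (1-θ) * z) (rep f hf hf1)).trans c1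
  have e2 : ENNReal.ofReal θ * (∫⁻ x, g x)
      = ∫⁻ t in Ioo (0:ℝ) 1, ENNReal.ofReal θ * volume {x | ENNReal.ofReal t < g x} :=
    (congrArg (fun z => ENNReal.ofReal θ * z) (rep g hg hg1)).trans c2
  calc ENNReal.ofReal (1 - θ) * (∫⁻ x, f x) + ENNReal.ofReal θ * (∫⁻ x, g x)
      = (∫⁻ t in Ioo (0:ℝ) 1, ENNReal.ofReal (1-θ) * volume {x | ENNReal.ofReal t < f x}) +
        ∫⁻ t in Ioo (0:ℝ) 1, ENNReal.ofReal θ * volume {x | ENNReal.ofReal t < g x} :=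
        congrArg₂ (· + ·) e1 e2
    _ = ∫⁻ t in Ioo (0:ℝ) 1, (ENNReal.ofReal (1-θ) * volume {x | ENNReal.ofReal t < f x} +
          ENNReal.ofReal θ * volume {x | ENNReal.ofReal t < g x}) :=
        (lintegral_add_left (hmonof.measurable.const_mul _) _).symm
    _ ≤ ∫⁻ t in Ioo (0:ℝ) 1, volume {x | ENNReal.ofReal t ≤ h x} :=
        setLIntegral_mono hmonoh.measurable key
    _ ≤ ∫⁻ x, h x := reph

/-- One-dimensional Prékopa–Leindler for bounded functions. -/
lemma PL1_bdd (hθ0 : 0 < θ) (hθ1 : θ < 1) (f g h : ℝ → ℝ≥0∞)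
    (hf : Measurable f) (hg : Measurable g) (hh : Measurable h)
    (n : ℕ) (hfb : ∀ x, f x ≤ n) (hgb : ∀ x, g x ≤ n)
    (hyp : ∀ x y, f x ^ (1 - θ) * g y ^ θ ≤ h ((1 - θ) * x + θ * y)) :
    (∫⁻ x, f x) ^ (1 - θ) * (∫⁻ x, g x) ^ θ ≤ ∫⁻ x, h x := by
  have h1θ : (0:ℝ) < 1 - θ := by linarith
  rcases eq_or_ne (∫⁻ x, f x) 0 with hf0 | hf0
  · rw [hf0, ENNReal.zero_rpow_of_pos h1θ, zero_mul]
    exact zero_le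
  rcases eq_or_ne (∫⁻ x, g x) 0 with hg0 | hg0
  · rw [hg0, ENNReal.zero_rpow_of_pos hθ0, mul_zero]
    exact zero_le
  set Mf := ⨆ x, f x with hMf
  set Mg := ⨆ x, g x with hMg
  have hMft : Mf ≠ ⊤ :=
    ne_top_of_le_ne_top (ENNReal.natCast_ne_top n) (iSup_le hfb)
  have hMgt : Mg ≠ ⊤ :=
    ne_top_of_le_ne_top (ENNReal.natCast_ne_top n) (iSup_le hgb)
  have hMf0 : Mf ≠ 0 := by
    intro h0
    apply hf0
    have hz : ∀ x, f x = 0 := fun x => le_antisymm (h0 ▸ le_iSup f x) (zero_le)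
    calc ∫⁻ x, f x = ∫⁻ _x, (0:ℝ≥0∞) := lintegral_congr hz
      _ = 0 := lintegral_zero
  have hMg0 : Mg ≠ 0 := by
    intro h0
    apply hg0
    have hz : ∀ x, g x = 0 := fun x => le_antisymm (h0 ▸ le_iSup g x) (zero_le)
    calc ∫⁻ x, g x = ∫⁻ _x, (0:ℝ≥0∞) := lintegral_congr hz
      _ = 0 := lintegral_zero
  set c := Mf ^ (1-θ) * Mg ^ θ with hc
  have hc0 : c ≠ 0 := mul_ne_zero (rpow_ne_zero' hMf0 h1θ.le) (rpow_ne_zero' hMg0 hθ0.le)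
  have hct : c ≠ ⊤ := ENNReal.mul_ne_top (ENNReal.rpow_ne_top_of_nonneg h1θ.le hMft)
    (ENNReal.rpow_ne_top_of_nonneg hθ0.le hMgt)
  have hfsup : ∀ t : ℝ, 0 < t → t < 1 → ∃ x, ENNReal.ofReal t < f x / Mf := by
    intro t ht0 ht1
    have h1 : ENNReal.ofReal t * Mf < Mf := by
      calc ENNReal.ofReal t * Mf < 1 * Mf :=
            ENNReal.mul_lt_mul_left hMf0 hMft (ENNReal.ofReal_lt_one.mpr ht1)
        _ = Mf := one_mul Mf
    have h2 : ENNReal.ofReal t * Mf < ⨆ x, f x := by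
      rw [← hMf]
      exact h1
    obtain ⟨x, hx⟩ := lt_iSup_iff.mp h2
    exact ⟨x, (ENNReal.lt_div_iff_mul_lt (Or.inl hMf0) (Or.inl hMft)).mpr hx⟩
  have hgsup : ∀ t : ℝ, 0 < t → t < 1 → ∃ x, ENNReal.ofReal t < g x / Mg := by
    intro t ht0 ht1
    have h1 : ENNReal.ofReal t * Mg < Mg := by
      calc ENNReal.ofReal t * Mg < 1 * Mg :=
            ENNReal.mul_lt_mul_left hMg0 hMgt (ENNReal.ofReal_lt_one.mpr ht1)
        _ = Mg := one_mul Mg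
    have h2 : ENNReal.ofReal t * Mg < ⨆ x, g x := by
      rw [← hMg]
      exact h1
    obtain ⟨x, hx⟩ := lt_iSup_iff.mp h2
    exact ⟨x, (ENNReal.lt_div_iff_mul_lt (Or.inl hMg0) (Or.inl hMgt)).mpr hx⟩
  have hyp' : ∀ x y, (f x / Mf) ^ (1-θ) * (g y / Mg) ^ θ ≤ h ((1-θ) * x + θ * y) / c := by
    intro x y
    rw [ENNReal.div_rpow_of_nonneg _ _ h1θ.le, ENNReal.div_rpow_of_nonneg _ _ hθ0.le,
      div_mul_div' (rpow_ne_zero' hMf0 h1θ.le) (rpow_ne_zero' hMg0 hθ0.le), ← hc]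
    exact ENNReal.div_le_div_right (hyp x y) c
  have hnorm := PL1_norm hθ0 hθ1 (fun x => f x / Mf) (fun x => g x / Mg)
    (fun x => h x / c) (hf.div_const _) (hg.div_const _) (hh.div_const _)
    (fun x => ENNReal.div_le_of_le_mul (by rw [one_mul]; exact le_iSup f x))
    (fun x => ENNReal.div_le_of_le_mul (by rw [one_mul]; exact le_iSup g x))
    hfsup hgsup hyp'
  have iff' : ∫⁻ x, f x / Mf = Mf⁻¹ * ∫⁻ x, f x := by
    calc ∫⁻ x, f x / Mf = ∫⁻ x, Mf⁻¹ * f x := lintegral_congr fun x => by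
          rw [div_eq_mul_inv, mul_comm]
      _ = Mf⁻¹ * ∫⁻ x, f x := lintegral_const_mul' _ _ (ENNReal.inv_ne_top.mpr hMf0)
  have igg' : ∫⁻ x, g x / Mg = Mg⁻¹ * ∫⁻ x, g x := by
    calc ∫⁻ x, g x / Mg = ∫⁻ x, Mg⁻¹ * g x := lintegral_congr fun x => by
          rw [div_eq_mul_inv, mul_comm]
      _ = Mg⁻¹ * ∫⁻ x, g x := lintegral_const_mul' _ _ (ENNReal.inv_ne_top.mpr hMg0)
  have ihh' : ∫⁻ x, h x / c = c⁻¹ * ∫⁻ x, h x := by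
    calc ∫⁻ x, h x / c = ∫⁻ x, c⁻¹ * h x := lintegral_congr fun x => by
          rw [div_eq_mul_inv, mul_comm]
      _ = c⁻¹ * ∫⁻ x, h x := lintegral_const_mul' _ _ (ENNReal.inv_ne_top.mpr hc0)
  have keyeq : (∫⁻ x, f x) ^ (1-θ) * (∫⁻ x, g x) ^ θ =
      c * ((Mf⁻¹ * ∫⁻ x, f x) ^ (1-θ) * (Mg⁻¹ * ∫⁻ x, g x) ^ θ) := by
    rw [ENNReal.mul_rpow_of_ne_zero (ENNReal.inv_ne_zero.mpr hMft) hf0,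
      ENNReal.mul_rpow_of_ne_zero (ENNReal.inv_ne_zero.mpr hMgt) hg0, hc]
    have e1 : Mf ^ (1-θ) * (Mf⁻¹) ^ (1-θ) = 1 := by
      rw [← ENNReal.mul_rpow_of_ne_zero hMf0 (ENNReal.inv_ne_zero.mpr hMft),
        ENNReal.mul_inv_cancel hMf0 hMft, ENNReal.one_rpow]
    have e2 : Mg ^ θ * (Mg⁻¹) ^ θ = 1 := by
      rw [← ENNReal.mul_rpow_of_ne_zero hMg0 (ENNReal.inv_ne_zero.mpr hMgt),
        ENNReal.mul_inv_cancel hMg0 hMgt, ENNReal.one_rpow]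
    calc (∫⁻ x, f x) ^ (1-θ) * (∫⁻ x, g x) ^ θ
        = (Mf ^ (1-θ) * Mf⁻¹ ^ (1-θ)) * (Mg ^ θ * Mg⁻¹ ^ θ) *
            ((∫⁻ x, f x) ^ (1-θ) * (∫⁻ x, g x) ^ θ) := by
          rw [e1, e2, one_mul, one_mul]
      _ = Mf ^ (1-θ) * Mg ^ θ *
            (Mf⁻¹ ^ (1-θ) * (∫⁻ x, f x) ^ (1-θ) * (Mg⁻¹ ^ θ * (∫⁻ x, g x) ^ θ)) := by
          ring
  rw [keyeq]
  calc c * ((Mf⁻¹ * ∫⁻ x, f x) ^ (1-θ) * (Mg⁻¹ * ∫⁻ x, g x) ^ θ)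
      ≤ c * (ENNReal.ofReal (1-θ) * (Mf⁻¹ * ∫⁻ x, f x) +
          ENNReal.ofReal θ * (Mg⁻¹ * ∫⁻ x, g x)) :=
        mul_le_mul_right (amgm hθ0 hθ1 _ _) c
    _ ≤ c * (c⁻¹ * ∫⁻ x, h x) := by
        refine mul_le_mul_right ?_ c
        calc ENNReal.ofReal (1-θ) * (Mf⁻¹ * ∫⁻ x, f x) + ENNReal.ofReal θ * (Mg⁻¹ * ∫⁻ x, g x)
            = ENNReal.ofReal (1-θ) * (∫⁻ x, f x / Mf) + ENNReal.ofReal θ * (∫⁻ x, g x / Mg) :=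
              congrArg₂ (· + ·) (congrArg (fun z => ENNReal.ofReal (1-θ) * z) iff'.symm)
                (congrArg (fun z => ENNReal.ofReal θ * z) igg'.symm)
          _ ≤ ∫⁻ x, h x / c := hnorm
          _ = c⁻¹ * ∫⁻ x, h x := ihh'
    _ = ∫⁻ x, h x := by
        rw [← mul_assoc, ENNReal.mul_inv_cancel hc0 hct, one_mul]

/-- One-dimensional Prékopa–Leindler. -/
lemma PL1 (hθ0 : 0 < θ) (hθ1 : θ < 1) (f g h : ℝ → ℝ≥0∞)
    (hf : Measurable f) (hg : Measurable g) (hh : Measurable h)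
    (hyp : ∀ x y, f x ^ (1 - θ) * g y ^ θ ≤ h ((1 - θ) * x + θ * y)) :
    (∫⁻ x, f x) ^ (1 - θ) * (∫⁻ x, g x) ^ θ ≤ ∫⁻ x, h x := by
  have h1θ : (0:ℝ) < 1 - θ := by linarith
  rcases eq_or_ne (∫⁻ x, f x) 0 with hf0 | hf0
  · rw [hf0, ENNReal.zero_rpow_of_pos h1θ, zero_mul]
    exact zero_le
  rcases eq_or_ne (∫⁻ x, g x) 0 with hg0 | hg0
  · rw [hg0, ENNReal.zero_rpow_of_pos hθ0, mul_zero]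
    exact zero_le
  have hbdd : ∀ n : ℕ, (∫⁻ x, min (f x) n) ^ (1-θ) * (∫⁻ x, min (g x) n) ^ θ ≤ ∫⁻ x, h x := by
    intro n
    refine PL1_bdd hθ0 hθ1 _ _ _ (hf.min measurable_const) (hg.min measurable_const) hh n
      (fun x => min_le_right _ _) (fun x => min_le_right _ _) ?_
    intro x y
    exact le_trans (mul_le_mul' (ENNReal.rpow_le_rpow (min_le_left _ _) h1θ.le)
      (ENNReal.rpow_le_rpow (min_le_left _ _) hθ0.le)) (hyp x y)
  have htendmin : ∀ k : ℝ → ℝ≥0∞, Measurable k →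
      Tendsto (fun n : ℕ => ∫⁻ x, min (k x) n) atTop (𝓝 (∫⁻ x, k x)) := by
    intro k hk
    refine lintegral_tendsto_of_tendsto_of_monotone
      (fun n => (hk.min measurable_const).aemeasurable) (ae_of_all _ fun x n m hnm => ?_)
      (ae_of_all _ fun x => ?_)
    · exact min_le_min le_rfl (by exact_mod_cast Nat.cast_le.mpr hnm)
    · rcases eq_or_ne (k x) ⊤ with hkx | hkx
      · rw [hkx]
        have hmin : ∀ n : ℕ, min (⊤:ℝ≥0∞) (n:ℝ≥0∞) = (n:ℝ≥0∞) := fun n => min_eq_right le_top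
        simp_rw [hmin]
        exact ENNReal.tendsto_nat_nhds_top
      · obtain ⟨N, hN⟩ := ENNReal.exists_nat_gt hkx
        refine tendsto_atTop_of_eventually_const (i₀ := N) fun n hn => ?_
        exact min_eq_left (le_trans hN.le (by exact_mod_cast Nat.cast_le.mpr hn))
  have hT := ENNReal.Tendsto.mul (((htendmin f hf)).ennrpow_const (1-θ))
    (Or.inl (rpow_ne_zero' hf0 h1θ.le)) ((htendmin g hg).ennrpow_const θ)
    (Or.inl (rpow_ne_zero' hg0 hθ0.le))
  exact le_of_tendsto hT (Eventually.of_forall hbdd)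

/-- The Prékopa–Leindler property of a measure. -/
def PLP (θ : ℝ) {α : Type*} [AddCommMonoid α] [Module ℝ α] [MeasurableSpace α]
    (μ : Measure α) : Prop :=
  ∀ f g h : α → ℝ≥0∞, Measurable f → Measurable g → Measurable h →
    (∀ x y, f x ^ (1 - θ) * g y ^ θ ≤ h ((1 - θ) • x + θ • y)) →
    (∫⁻ x, f x ∂μ) ^ (1 - θ) * (∫⁻ x, g x ∂μ) ^ θ ≤ ∫⁻ x, h x ∂μ

lemma plp_real (hθ0 : 0 < θ) (hθ1 : θ < 1) : PLP θ (volume : Measure ℝ) := by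
  intro f g h hf hg hh hyp
  refine PL1 hθ0 hθ1 f g h hf hg hh fun x y => ?_
  simpa [smul_eq_mul] using hyp x y

lemma plp_prod (hθ0 : 0 < θ) (hθ1 : θ < 1) {β : Type*} [MeasurableSpace β] [AddCommMonoid β]
    [Module ℝ β] (ν : Measure β) [SigmaFinite ν] (hβ : PLP θ ν) :
    PLP θ ((volume : Measure ℝ).prod ν) := by
  intro f g h hf hg hh hyp
  rw [lintegral_prod _ hf.aemeasurable, lintegral_prod _ hg.aemeasurable,
    lintegral_prod _ hh.aemeasurable]
  refine plp_real hθ0 hθ1 _ _ _ hf.lintegral_prod_right' hg.lintegral_prod_right'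
    hh.lintegral_prod_right' ?_
  intro a b
  refine hβ (fun x => f (a, x)) (fun y => g (b, y)) (fun z => h ((1-θ) • a + θ • b, z))
    (hf.comp measurable_prodMk_left) (hg.comp measurable_prodMk_left)
    (hh.comp measurable_prodMk_left) ?_
  intro x y
  have hpt : ((1-θ) • a + θ • b, (1-θ) • x + θ • y) = (1-θ) • (a, x) + θ • (b, y) := by
    simp [Prod.smul_mk, Prod.mk_add_mk]
  show f (a, x) ^ (1 - θ) * g (b, y) ^ θ ≤ h ((1-θ) • a + θ • b, (1-θ) • x + θ • y)
  rw [hpt]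
  exact hyp (a, x) (b, y)

lemma plp_transfer {α β : Type*} [MeasurableSpace α] [AddCommMonoid α] [Module ℝ α]
    [MeasurableSpace β] [AddCommMonoid β] [Module ℝ β]
    {μ : Measure α} {ν : Measure β} (e : α ≃ᵐ β) (hp : MeasurePreserving e μ ν)
    (he : ∀ (c d : ℝ) (x y : α), e (c • x + d • y) = c • e x + d • e y)
    (hν : PLP θ ν) : PLP θ μ := by
  intro f g h hf hg hh hyp
  have hsymm : ∀ (c d : ℝ) (x y : β), e.symm (c • x + d • y) = c • e.symm x + d • e.symm y := by
    intro c d x y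
    apply e.injective
    rw [e.apply_symm_apply, he, e.apply_symm_apply, e.apply_symm_apply]
  have h1 : ∫⁻ x, f x ∂μ = ∫⁻ x, f (e.symm x) ∂ν := ((hp.symm e).lintegral_comp hf).symm
  have h2 : ∫⁻ x, g x ∂μ = ∫⁻ x, g (e.symm x) ∂ν := ((hp.symm e).lintegral_comp hg).symm
  have h3 : ∫⁻ x, h x ∂μ = ∫⁻ x, h (e.symm x) ∂ν := ((hp.symm e).lintegral_comp hh).symm
  rw [h1, h2, h3]
  refine hν (fun x => f (e.symm x)) (fun x => g (e.symm x)) (fun x => h (e.symm x))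
    (hf.comp e.symm.measurable) (hg.comp e.symm.measurable) (hh.comp e.symm.measurable) ?_
  intro x y
  show f (e.symm x) ^ (1 - θ) * g (e.symm y) ^ θ ≤ h (e.symm ((1 - θ) • x + θ • y))
  rw [hsymm]
  exact hyp _ _

lemma plp_pi (hθ0 : 0 < θ) (hθ1 : θ < 1) : ∀ n : ℕ, PLP θ (volume : Measure (Fin n → ℝ))
  | 0 => by
      intro f g h hf hg hh hyp
      set x₀ : Fin 0 → ℝ := fun i => i.elim0 with hx₀
      have huniv : (volume : Measure (Fin 0 → ℝ)) Set.univ = 1 := by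
        rw [MeasureTheory.volume_pi, Measure.pi_univ]
        simp
      have hrep : ∀ k : (Fin 0 → ℝ) → ℝ≥0∞, ∫⁻ x, k x = k x₀ := by
        intro k
        refine (lintegral_unique k).trans ?_
        rw [huniv, mul_one]
        exact congrArg k (Subsingleton.elim _ _)
      have h1 := hyp x₀ x₀
      have hmid : (1-θ) • x₀ + θ • x₀ = x₀ := Subsingleton.elim _ _
      rw [hmid] at h1
      calc (∫⁻ x, f x) ^ (1-θ) * (∫⁻ x, g x) ^ θ
          = f x₀ ^ (1-θ) * g x₀ ^ θ :=
            congrArg₂ (· * ·) (congrArg (· ^ (1-θ)) (hrep f)) (congrArg (· ^ θ) (hrep g))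
        _ ≤ h x₀ := h1
        _ = ∫⁻ x, h x := (hrep h).symm
  | (n+1) => by
      have ih := plp_pi hθ0 hθ1 n
      have hprod : PLP θ ((volume : Measure ℝ).prod (volume : Measure (Fin n → ℝ))) :=
        plp_prod hθ0 hθ1 _ ih
      have hprod' : PLP θ (volume : Measure (ℝ × (Fin n → ℝ))) := by
        rw [show (volume : Measure (ℝ × (Fin n → ℝ)))
          = (volume : Measure ℝ).prod (volume : Measure (Fin n → ℝ)) from rfl]
        exact hprod
      set e := MeasurableEquiv.piFinSuccAbove (fun _ : Fin (n+1) => ℝ) 0 with hedef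
      have hp : MeasurePreserving e volume volume :=
        volume_preserving_piFinSuccAbove (fun _ : Fin (n+1) => ℝ) 0
      refine plp_transfer e hp ?_ hprod'
      intro c d x y
      show ((c • x + d • y) 0, fun j => (c • x + d • y) (Fin.succAbove 0 j)) =
        c • (x 0, fun j => x (Fin.succAbove 0 j)) + d • (y 0, fun j => y (Fin.succAbove 0 j))
      simp only [Prod.smul_mk, Prod.mk_add_mk, Prod.mk.injEq]
      constructor
      · simp [smul_eq_mul]
      · funext j
        simp [smul_eq_mul]

end PLAux

theorem stmt12 {m : ℕ} (S : (Fin m → ℝ) → ℝ) (hS : ConvexOn ℝ Set.univ S)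
    (fZ : (Fin m → ℝ) → ℝ) (hmeas : Measurable fZ) (hfZ0 : ∀ z, 0 ≤ fZ z)
    (hdens : ∫ z, fZ z = 1)
    (hfZlc : ∀ (z₁ z₂ : Fin m → ℝ) (θ : ℝ), 0 ≤ θ → θ ≤ 1 →
      fZ ((1 - θ) • z₁ + θ • z₂) ≥ fZ z₁ ^ (1 - θ) * fZ z₂ ^ θ) :
    ∀ (g₁ g₂ θ : ℝ), 0 ≤ θ → θ ≤ 1 →
      (∫ z in {z : Fin m → ℝ | S z ≤ (1 - θ) * g₁ + θ * g₂}, fZ z) ≥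
        (∫ z in {z : Fin m → ℝ | S z ≤ g₁}, fZ z) ^ (1 - θ) *
          (∫ z in {z : Fin m → ℝ | S z ≤ g₂}, fZ z) ^ θ := by
  intro g₁ g₂ θ hθ0 hθ1
  rcases eq_or_lt_of_le hθ0 with hθ0' | hθ0'
  · -- θ = 0
    rw [← hθ0']
    simp only [sub_zero, zero_mul, add_zero, one_mul, Real.rpow_one, Real.rpow_zero, mul_one]
    exact le_refl _
  rcases eq_or_lt_of_le hθ1 with hθ1' | hθ1'
  · -- θ = 1
    rw [hθ1']
    simp only [sub_self, zero_mul, one_mul, zero_add, Real.rpow_zero, Real.rpow_one, one_mul]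
    exact le_refl _
  have h1θ : (0:ℝ) < 1 - θ := by linarith
  have hInt : Integrable fZ := by
    by_contra hni
    rw [integral_undef hni] at hdens
    norm_num at hdens
  have hScont : Continuous S := hS.locallyLipschitz.continuous
  set A₁ : Set (Fin m → ℝ) := {z | S z ≤ g₁} with hA₁def
  set A₂ : Set (Fin m → ℝ) := {z | S z ≤ g₂} with hA₂def
  set A : Set (Fin m → ℝ) := {z | S z ≤ (1 - θ) * g₁ + θ * g₂} with hAdef
  have hA₁ : MeasurableSet A₁ := (isClosed_le hScont continuous_const).measurableSet
  have hA₂ : MeasurableSet A₂ := (isClosed_le hScont continuous_const).measurableSet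
  have hA : MeasurableSet A := (isClosed_le hScont continuous_const).measurableSet
  set F : (Fin m → ℝ) → ℝ≥0∞ := A₁.indicator fun z => ENNReal.ofReal (fZ z) with hFdef
  set G : (Fin m → ℝ) → ℝ≥0∞ := A₂.indicator fun z => ENNReal.ofReal (fZ z) with hGdef
  set H : (Fin m → ℝ) → ℝ≥0∞ := A.indicator fun z => ENNReal.ofReal (fZ z) with hHdef
  have hFm : Measurable F := hmeas.ennreal_ofReal.indicator hA₁
  have hGm : Measurable G := hmeas.ennreal_ofReal.indicator hA₂
  have hHm : Measurable H := hmeas.ennreal_ofReal.indicator hA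
  have hyp : ∀ z₁ z₂, F z₁ ^ (1 - θ) * G z₂ ^ θ ≤ H ((1 - θ) • z₁ + θ • z₂) := by
    intro z₁ z₂
    by_cases h₁ : z₁ ∈ A₁
    · by_cases h₂ : z₂ ∈ A₂
      · have hmem : (1 - θ) • z₁ + θ • z₂ ∈ A := by
          show S ((1 - θ) • z₁ + θ • z₂) ≤ (1 - θ) * g₁ + θ * g₂
          have hconv := hS.2 (Set.mem_univ z₁) (Set.mem_univ z₂) h1θ.le hθ0'.le
            (by ring : (1 - θ) + θ = 1)
          simp only [smul_eq_mul] at hconv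
          calc S ((1 - θ) • z₁ + θ • z₂) ≤ (1 - θ) * S z₁ + θ * S z₂ := hconv
            _ ≤ (1 - θ) * g₁ + θ * g₂ :=
              add_le_add (mul_le_mul_of_nonneg_left h₁ h1θ.le)
                (mul_le_mul_of_nonneg_left h₂ hθ0'.le)
        rw [hFdef, hGdef, hHdef, Set.indicator_of_mem h₁, Set.indicator_of_mem h₂,
          Set.indicator_of_mem hmem]
        calc ENNReal.ofReal (fZ z₁) ^ (1 - θ) * ENNReal.ofReal (fZ z₂) ^ θ
            = ENNReal.ofReal (fZ z₁ ^ (1 - θ) * fZ z₂ ^ θ) := by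
              rw [ENNReal.ofReal_rpow_of_nonneg (hfZ0 z₁) h1θ.le,
                ENNReal.ofReal_rpow_of_nonneg (hfZ0 z₂) hθ0'.le,
                ← ENNReal.ofReal_mul (Real.rpow_nonneg (hfZ0 z₁) _)]
          _ ≤ ENNReal.ofReal (fZ ((1 - θ) • z₁ + θ • z₂)) :=
              ENNReal.ofReal_le_ofReal (hfZlc z₁ z₂ θ hθ0 hθ1)
      · rw [hGdef, Set.indicator_of_notMem h₂, ENNReal.zero_rpow_of_pos hθ0', mul_zero]
        exact zero_le
    · rw [hFdef, Set.indicator_of_notMem h₁, ENNReal.zero_rpow_of_pos h1θ, zero_mul]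
      exact zero_le
  have hkey := PLAux.plp_pi hθ0' hθ1' m F G H hFm hGm hHm hyp
  have hnn : 0 ≤ᵐ[(volume : Measure (Fin m → ℝ))] fZ := ae_of_all _ hfZ0
  have conv : ∀ (B : Set (Fin m → ℝ)), MeasurableSet B →
      ∫⁻ z, B.indicator (fun z => ENNReal.ofReal (fZ z)) z =
        ENNReal.ofReal (∫ z in B, fZ z) := by
    intro B hB
    rw [lintegral_indicator hB]
    exact (ofReal_integral_eq_lintegral_ofReal hInt.integrableOn
      (ae_restrict_of_ae hnn)).symm
  rw [hFdef, hGdef, hHdef] at hkey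
  rw [conv A₁ hA₁, conv A₂ hA₂, conv A hA] at hkey
  have hI₁ : 0 ≤ ∫ z in A₁, fZ z := setIntegral_nonneg hA₁ fun z _ => hfZ0 z
  have hI₂ : 0 ≤ ∫ z in A₂, fZ z := setIntegral_nonneg hA₂ fun z _ => hfZ0 z
  have hIA : 0 ≤ ∫ z in A, fZ z := setIntegral_nonneg hA fun z _ => hfZ0 z
  rw [ge_iff_le, ← ENNReal.ofReal_le_ofReal_iff hIA]
  calc ENNReal.ofReal ((∫ z in A₁, fZ z) ^ (1 - θ) * (∫ z in A₂, fZ z) ^ θ)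
      = ENNReal.ofReal (∫ z in A₁, fZ z) ^ (1 - θ) *
          ENNReal.ofReal (∫ z in A₂, fZ z) ^ θ := by
        rw [ENNReal.ofReal_mul (Real.rpow_nonneg hI₁ _),
          ENNReal.ofReal_rpow_of_nonneg hI₁ h1θ.le, ENNReal.ofReal_rpow_of_nonneg hI₂ hθ0'.le]
    _ ≤ ENNReal.ofReal (∫ z in A, fZ z) := hkey
end
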